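/- Let A be a nonempty finite set, k ≥ 1, and let C be a nonempty convex compact subset of (Δ^k)^A (an s-rectangular uncertainty set for one state, allowing correlation across actions). Let r ∈ ℝ^A, v ∈ ℝ^k, γ ≥ 0. Then max over π ∈ Δ^{|A|} of min over p = (p_a)_{a∈A} ∈ C of Σ_{a∈A} π_a·( r_a + γ·Σ_i p_a(i)·v_i ) equals min over p ∈ C of max_{a∈A} ( r_a + γ·Σ_i p_a(i)·v_i ). -/

import Mathlib

/-- **Minimax exchange for `s`-rectangular robust Bellman updates.**
Let `C` be a nonempty convex compact set of families `(p_a)_{a∈A}` of probability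
vectors (an `s`-rectangular uncertainty set, possibly correlated across actions).  Then
`max_{π ∈ Δ^{|A|}} min_{p ∈ C} Σ_a π_a (r_a + γ⟨p_a, v⟩)
  = min_{p ∈ C} max_a (r_a + γ⟨p_a, v⟩)`:
there exists a common value that is the greatest of the outer (max–min) values and the
least of the inner (min–max) values. -/
theorem s_rectangular_minimax
    (A : Type*) [Fintype A] [Nonempty A]
    (k : ℕ) (hk : 1 ≤ k)
    (C : Set (A → Fin k → ℝ))
    (hCne : C.Nonempty) (hCconv : Convex ℝ C) (hCcomp : IsCompact C)
    (hCsub : ∀ p ∈ C, ∀ a, p a ∈ stdSimplex ℝ (Fin k))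
    (r : A → ℝ) (v : Fin k → ℝ) (γ : ℝ) (hγ : 0 ≤ γ) :
    ∃ m : ℝ,
      IsGreatest {x : ℝ | ∃ π ∈ stdSimplex ℝ A,
          x = sInf {y : ℝ | ∃ p ∈ C, y = ∑ a, π a * (r a + γ * ∑ i, p a i * v i)}} m ∧
      IsLeast {y : ℝ | ∃ p ∈ C,
          y = Finset.univ.sup' Finset.univ_nonempty
                (fun a => r a + γ * ∑ i, p a i * v i)} m := by
  classical
  -- the affine payoff map
  set F : (A → Fin k → ℝ) → A → ℝ := fun p a => r a + γ * ∑ i, p a i * v i with hFdef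
  have hFcont : ∀ a, Continuous fun p => F p a := by
    intro a
    apply Continuous.add continuous_const
    exact Continuous.mul continuous_const
      (continuous_finset_sum _ fun i _ =>
        (by fun_prop))
  -- F is affine
  have hFaffine : ∀ (p q : A → Fin k → ℝ) (s t : ℝ), s + t = 1 →
      F (s • p + t • q) = fun a => s * F p a + t * F q a := by
    intro p q s t hst
    funext a
    simp only [F, Pi.add_apply, Pi.smul_apply, smul_eq_mul]
    have : ∑ i, (s * p a i + t * q a i) * v i
        = s * (∑ i, p a i * v i) + t * (∑ i, q a i * v i) := by
      rw [Finset.mul_sum, Finset.mul_sum, ← Finset.sum_add_distrib]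
      congr 1; funext i; ring
    rw [this]
    linear_combination (-(r a)) * hst
  -- continuity of g = sup' of F
  have hgcont : Continuous fun p => Finset.univ.sup' Finset.univ_nonempty (F p) := by
    have := Continuous.finset_sup'_apply (s := (Finset.univ : Finset A))
      (f := fun a p => F p a) Finset.univ_nonempty (fun a _ => hFcont a)
    convert this using 2
  -- minimizer of g on C
  obtain ⟨p₀, hp₀C, hp₀min⟩ := hCcomp.exists_isMinOn hCne hgcont.continuousOn
  set m := Finset.univ.sup' Finset.univ_nonempty (F p₀) with hm
  have hmin : ∀ p ∈ C, m ≤ Finset.univ.sup' Finset.univ_nonempty (F p) :=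
    fun p hp => hp₀min hp
  refine ⟨m, ?_, ?_⟩
  swap
  · -- IsLeast for the inner min–max set
    constructor
    · exact ⟨p₀, hp₀C, rfl⟩
    · rintro y ⟨p, hp, rfl⟩
      exact hmin p hp
  -- IsGreatest for the outer max–min set
  -- First: the general upper bound
  have hBdd : ∀ π : A → ℝ, π ∈ stdSimplex ℝ A →
      BddBelow {y : ℝ | ∃ p ∈ C, y = ∑ a, π a * (F p a)} := by
    intro π hπ
    have : {y : ℝ | ∃ p ∈ C, y = ∑ a, π a * (F p a)}
        = (fun p => ∑ a, π a * (F p a)) '' C := by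
      ext y; constructor
      · rintro ⟨p, hp, rfl⟩; exact ⟨p, hp, rfl⟩
      · rintro ⟨p, hp, rfl⟩; exact ⟨p, hp, rfl⟩
    rw [this]
    exact (hCcomp.image (by
      exact continuous_finset_sum _ fun a _ => (continuous_const.mul (hFcont a)))).bddBelow
  have hub : ∀ x ∈ {x : ℝ | ∃ π ∈ stdSimplex ℝ A,
      x = sInf {y : ℝ | ∃ p ∈ C, y = ∑ a, π a * (F p a)}}, x ≤ m := by
    rintro x ⟨π, hπ, rfl⟩
    have hmem : (∑ a, π a * (F p₀ a)) ∈ {y : ℝ | ∃ p ∈ C, y = ∑ a, π a * (F p a)} :=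
      ⟨p₀, hp₀C, rfl⟩
    refine le_trans (csInf_le (hBdd π hπ) hmem) ?_
    calc ∑ a, π a * (F p₀ a) ≤ ∑ a, π a * m := by
          apply Finset.sum_le_sum
          intro a _
          exact mul_le_mul_of_nonneg_left
            (Finset.le_sup' (F p₀) (Finset.mem_univ a)) (hπ.1 a)
      _ = m := by rw [← Finset.sum_mul, hπ.2, one_mul]
  refine ⟨?_, hub⟩
  -- Existence of a maximizing π via separation
  -- D = image of C under F, convex
  set D : Set (A → ℝ) := F '' C with hD
  have hDconv : Convex ℝ D := by
    rintro y ⟨p, hp, rfl⟩ z ⟨q, hq, rfl⟩ s t hs ht hst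
    refine ⟨s • p + t • q, hCconv hp hq hs ht hst, ?_⟩
    rw [hFaffine p q s t hst]
    funext a
    simp [smul_eq_mul]
  have hDne : D.Nonempty := hCne.image F
  -- open convex set of vectors strictly below m
  set S : Set (A → ℝ) := {y | ∀ a, y a < m} with hS
  have hSopen : IsOpen S := by
    have : S = ⋂ a, (fun y : A → ℝ => y a) ⁻¹' Set.Iio m := by
      ext y; simp [S]
    rw [this]
    exact isOpen_iInter_of_finite fun a => (isOpen_Iio).preimage (continuous_apply a)
  have hSconv : Convex ℝ S := by
    rintro y hy z hz s t hs ht hst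
    intro a
    have : s * y a + t * z a < (s + t) * m := by
      rcases eq_or_lt_of_le hs with hs0 | hs0
      · rcases eq_or_lt_of_le ht with ht0 | ht0
        · exfalso; rw [← hs0, ← ht0] at hst; simpa using hst
        · nlinarith [hy a, hz a]
      · rcases eq_or_lt_of_le ht with ht0 | ht0
        · nlinarith [hy a, hz a]
        · nlinarith [hy a, hz a]
    simpa [hst] using this
  have hdisj : Disjoint S D := by
    rw [Set.disjoint_left]
    rintro y hyS ⟨p, hp, rfl⟩
    have h1 : Finset.univ.sup' Finset.univ_nonempty (F p) < m := by
      rw [Finset.sup'_lt_iff]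
      intro a _; exact hyS a
    exact absurd (hmin p hp) (not_le.mpr h1)
  obtain ⟨f, c, hfS, hfD⟩ := geometric_hahn_banach_open hSconv hSopen hDconv hdisj
  -- coefficients of f
  set π₀ : A → ℝ := fun a => f (fun j => if a = j then (1 : ℝ) else 0) with hπ₀
  have hf_eq : ∀ y : A → ℝ, f y = ∑ a, y a * π₀ a := by
    intro y
    conv_lhs => rw [pi_eq_sum_univ y, map_sum]
    apply Finset.sum_congr rfl
    intro a _
    rw [map_smul]
    simp [π₀, smul_eq_mul]
  -- the base point of S
  have hbase : (fun _ : A => m - 1) ∈ S := fun a => by simp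
  -- π₀ is nonnegative
  have hπ₀nn : ∀ a, 0 ≤ π₀ a := by
    intro a
    by_contra h
    push_neg at h
    set t : ℝ := (c - f (fun _ : A => m - 1)) / (-π₀ a) with ht
    have htpos : 0 < t := div_pos (sub_pos.mpr (hfS _ hbase)) (by linarith)
    set z : A → ℝ := (fun _ : A => m - 1) - t • (fun j => if a = j then (1 : ℝ) else 0)
      with hz
    have hzS : z ∈ S := by
      intro b
      simp only [z, Pi.sub_apply, Pi.smul_apply, smul_eq_mul]
      by_cases hab : a = b
      · simp [hab]; nlinarith
      · simp [hab]
    have hne0 : (-π₀ a) ≠ 0 := by linarith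
    have ht2 : t * (-π₀ a) = c - f (fun _ : A => m - 1) := div_mul_cancel₀ _ hne0
    have ht2' : -(t * π₀ a) = c - f (fun _ : A => m - 1) := by rw [← ht2]; ring
    have hfz : f z = c := by
      simp only [z, map_sub, map_smul, smul_eq_mul]
      rw [show f (fun j => if a = j then (1 : ℝ) else 0) = π₀ a from rfl]
      linarith
    have := hfS z hzS
    linarith
  -- π₀ is not identically zero
  have hSum : 0 < ∑ a, π₀ a := by
    rcases eq_or_lt_of_le (Finset.sum_nonneg fun a _ => hπ₀nn a) with h0 | h0
    · exfalso
      have hall : ∀ a ∈ Finset.univ, π₀ a = 0 :=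
        (Finset.sum_eq_zero_iff_of_nonneg fun a _ => hπ₀nn a).mp h0.symm
      have hf0 : ∀ y : A → ℝ, f y = 0 := by
        intro y; rw [hf_eq]
        apply Finset.sum_eq_zero
        intro a _; rw [hall a (Finset.mem_univ a), mul_zero]
      obtain ⟨y, hy⟩ := hDne
      have h1 : c ≤ 0 := by have := hfD y hy; rwa [hf0 y] at this
      have h2 : (0 : ℝ) < c := by have := hfS _ hbase; rwa [hf0] at this
      linarith
    · exact h0
  -- m * sum ≤ c
  have hmc : m * (∑ a, π₀ a) ≤ c := by
    apply le_of_forall_pos_le_add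
    intro ε hε
    set δ : ℝ := ε / (∑ a, π₀ a) with hδ
    have hδpos : 0 < δ := div_pos hε hSum
    have hmem : (fun _ : A => m - δ) ∈ S := fun a => by simp [hδpos]
    have := hfS _ hmem
    rw [hf_eq] at this
    have heq : ∑ a, (m - δ) * π₀ a = (m - δ) * ∑ a, π₀ a := by
      rw [Finset.mul_sum]
    rw [heq] at this
    have hδS : δ * (∑ a, π₀ a) = ε := by
      rw [hδ]; field_simp
    nlinarith
  -- the maximizing π
  set π : A → ℝ := fun a => π₀ a / (∑ b, π₀ b) with hπ
  have hπsimplex : π ∈ stdSimplex ℝ A := by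
    constructor
    · intro a; exact div_nonneg (hπ₀nn a) hSum.le
    · rw [← Finset.sum_div, div_self hSum.ne']
  refine ⟨π, hπsimplex, ?_⟩
  -- sInf over this π equals m
  have hlow : ∀ y ∈ {y : ℝ | ∃ p ∈ C, y = ∑ a, π a * (F p a)}, m ≤ y := by
    rintro y ⟨p, hp, rfl⟩
    have h1 : c ≤ f (F p) := hfD (F p) ⟨p, hp, rfl⟩
    rw [hf_eq] at h1
    have h2 : ∑ a, π a * (F p a) = (∑ a, F p a * π₀ a) / (∑ b, π₀ b) := by
      rw [Finset.sum_div]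
      apply Finset.sum_congr rfl
      intro a _
      rw [hπ]; ring
    rw [h2, le_div_iff₀ hSum]
    calc m * (∑ b, π₀ b) ≤ c := hmc
      _ ≤ ∑ a, F p a * π₀ a := h1
  have h1 : m ≤ sInf {y : ℝ | ∃ p ∈ C, y = ∑ a, π a * (F p a)} := by
    apply le_csInf
    · exact ⟨_, p₀, hp₀C, rfl⟩
    · exact hlow
  have h2 : sInf {y : ℝ | ∃ p ∈ C, y = ∑ a, π a * (F p a)} ≤ m :=
    hub _ ⟨π, hπsimplex, rfl⟩
  exact (le_antisymm h2 h1).symm
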